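/- Let R be a commutative Von Neumann regular ring. Then the class 𝒫₁(R) is covering if and only if R is hereditary (equivalently, every ideal of R is projective). -/

import Mathlib

universe u

open MulOpposite Function

/-- An `A`-module `M` has projective dimension at most 1, i.e. there is a short exact
sequence `0 → ker g → P → M → 0` with `P` and `ker g` projective. -/
def ProjDimLE1 (A : Type u) [Ring A] (M : Type u) [AddCommGroup M] [Module A M] : Prop :=
  ∃ (P : ModuleCat.{u} A) (g : P →ₗ[A] M), Module.Projective A P ∧
    Function.Surjective g ∧ Module.Projective A (LinearMap.ker g)

/-- `Ext¹_A(X, Y) = 0`: every short exact sequence `0 → Y → E → X → 0` splits. -/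
def Ext1Vanishes (A : Type u) [Ring A] (X Y : Type u) [AddCommGroup X] [Module A X]
    [AddCommGroup Y] [Module A Y] : Prop :=
  ∀ (E : Type u) [AddCommGroup E] [Module A E], ∀ (i : Y →ₗ[A] E) (p : E →ₗ[A] X),
    Function.Injective i → Function.Surjective p → LinearMap.range i = LinearMap.ker p →
    ∃ s : X →ₗ[A] E, p.comp s = LinearMap.id

/-- `φ : P → M` is a `C`-cover of `M`: `P ∈ C`, every map from a module of `C` to `M`
factors through `φ`, and every endomorphism `e` of `P` with `φ ∘ e = φ` is an automorphism. -/
def IsCover (A : Type u) [Ring A] (C : Set (ModuleCat.{u} A)) (P : ModuleCat.{u} A)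
    (M : Type u) [AddCommGroup M] [Module A M] (φ : P →ₗ[A] M) : Prop :=
  P ∈ C ∧
  (∀ P' ∈ C, ∀ ψ : (P' : Type u) →ₗ[A] M, ∃ h : (P' : Type u) →ₗ[A] (P : Type u),
    φ.comp h = ψ) ∧
  (∀ e : (P : Type u) →ₗ[A] (P : Type u), φ.comp e = φ → Function.Bijective e)

/-- The class `C` is covering: every `A`-module admits a `C`-cover. -/
def IsCoveringClass (A : Type u) [Ring A] (C : Set (ModuleCat.{u} A)) : Prop :=
  ∀ M : ModuleCat.{u} A, ∃ (P : ModuleCat.{u} A) (φ : P →ₗ[A] (M : Type u)),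
    IsCover A C P (M : Type u) φ

/-- The class `𝒫₁(A)` of modules of projective dimension at most one. -/
def P1Class (A : Type u) [Ring A] : Set (ModuleCat.{u} A) := {M | ProjDimLE1 A M}

section Auxiliary

variable {R : Type u} [CommRing R]

/-- Factor a linear map through a surjection whose kernel it kills. -/
noncomputable def factorThru {F K W : Type u}
    [AddCommGroup F] [Module R F] [AddCommGroup K] [Module R K] [AddCommGroup W] [Module R W]
    (θ : F →ₗ[R] K) (hθ : Function.Surjective θ) (ψ : F →ₗ[R] W)
    (hker : LinearMap.ker θ ≤ LinearMap.ker ψ) : K →ₗ[R] W :=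
  (Submodule.liftQ (LinearMap.ker θ) ψ hker).comp
    (θ.quotKerEquivOfSurjective hθ).symm.toLinearMap

theorem factorThru_apply {F K W : Type u}
    [AddCommGroup F] [Module R F] [AddCommGroup K] [Module R K] [AddCommGroup W] [Module R W]
    (θ : F →ₗ[R] K) (hθ : Function.Surjective θ) (ψ : F →ₗ[R] W)
    (hker : LinearMap.ker θ ≤ LinearMap.ker ψ) (y : F) :
    factorThru θ hθ ψ hker (θ y) = ψ y := by
  have h1 : (θ.quotKerEquivOfSurjective hθ).symm (θ y) = Submodule.Quotient.mk y := by
    rw [LinearEquiv.symm_apply_eq]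
    rfl
  simp only [factorThru, LinearMap.comp_apply, LinearEquiv.coe_coe, h1, Submodule.liftQ_apply]

/-- Over a ring all of whose ideals are projective, quotients of injective modules
are injective (Baer's criterion plus lifting along the quotient map). -/
theorem injective_quotient_of_hereditary
    (hered : ∀ I : Ideal R, Module.Projective R I)
    (E : Type u) [AddCommGroup E] [Module R E] (hE : Module.Injective R E)
    (N : Submodule R E) : Module.Injective R (E ⧸ N) := by
  apply Module.Baer.injective
  intro J f
  haveI := hered J
  obtain ⟨g, hg⟩ := Module.projective_lifting_property N.mkQ f N.mkQ_surjective
  obtain ⟨G, hG⟩ := hE.out J.subtype J.injective_subtype g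
  refine ⟨N.mkQ.comp G, fun x hx => ?_⟩
  rw [LinearMap.comp_apply, show G x = g ⟨x, hx⟩ from hG ⟨x, hx⟩]
  exact DFunLike.congr_fun hg ⟨x, hx⟩

/-- Over a ring all of whose ideals are projective, every submodule of a free module
is projective. -/
theorem submodule_projective_of_hereditary
    (hered : ∀ I : Ideal R, Module.Projective R I)
    (F : Type u) [AddCommGroup F] [Module R F] [Module.Free R F]
    (K : Submodule R F) : Module.Projective R K := by
  classical
  set θ : ((↥K) →₀ R) →ₗ[R] ↥K := Finsupp.linearCombination R (id : ↥K → ↥K) with hθdef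
  have hθ : Function.Surjective θ := Finsupp.linearCombination_surjective R Function.surjective_id
  set A : Submodule R ((↥K) →₀ R) := LinearMap.ker θ with hA
  -- embed A into an injective module E
  let Acat : ModuleCat.{u} R := ModuleCat.of R ↥A
  let Ecat := CategoryTheory.Injective.under Acat
  let E : Type u := (Ecat : Type u)
  haveI : CategoryTheory.Injective (ModuleCat.of R E) :=
    CategoryTheory.Injective.injective_under Acat
  haveI hEinj : Module.Injective R E := Module.injective_module_of_injective_object R E
  let ι : ↥A →ₗ[R] E := (CategoryTheory.Injective.ι Acat).hom
  have hι : Function.Injective ι :=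
    (ModuleCat.mono_iff_injective (CategoryTheory.Injective.ι Acat)).mp inferInstance
  -- h : (K →₀ R) → E extending ι
  obtain ⟨h, hh⟩ := hEinj.out (X := ↥A) (Y := ((↥K) →₀ R)) A.subtype A.injective_subtype ι
  set N' : Submodule R E := LinearMap.range ι with hN'
  have hkerψ : LinearMap.ker θ ≤ LinearMap.ker (N'.mkQ.comp h) := by
    intro a ha
    have h1 : h a = ι ⟨a, ha⟩ := hh ⟨a, ha⟩
    rw [LinearMap.mem_ker, LinearMap.comp_apply, h1, Submodule.mkQ_apply,
      Submodule.Quotient.mk_eq_zero]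
    exact ⟨⟨a, ha⟩, rfl⟩
  let hbar : ↥K →ₗ[R] (E ⧸ N') := factorThru θ hθ (N'.mkQ.comp h) hkerψ
  have hbar_apply : ∀ y, hbar (θ y) = N'.mkQ (h y) := fun y =>
    factorThru_apply θ hθ (N'.mkQ.comp h) hkerψ y
  have hEN := injective_quotient_of_hereditary hered E hEinj N'
  obtain ⟨H, hH⟩ := hEN.out K.subtype K.injective_subtype hbar
  obtain ⟨G, hG⟩ := Module.projective_lifting_property N'.mkQ H N'.mkQ_surjective
  let d : ((↥K) →₀ R) →ₗ[R] E := h - (G.comp K.subtype).comp θ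
  have hdmem : ∀ y, d y ∈ N' := by
    intro y
    have h1 : N'.mkQ (G (K.subtype (θ y))) = H (K.subtype (θ y)) := DFunLike.congr_fun hG _
    have h2 : H (K.subtype (θ y)) = hbar (θ y) := hH (θ y)
    have h3 : N'.mkQ (d y) = 0 := by
      simp only [d, LinearMap.sub_apply, LinearMap.comp_apply, map_sub]
      rw [h1, h2, hbar_apply y, sub_self]
    rwa [Submodule.mkQ_apply, Submodule.Quotient.mk_eq_zero] at h3
  have hdA : ∀ a : ↥A, d (A.subtype a) = ι a := by
    intro a
    have hθa : θ (A.subtype a) = 0 := a.2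
    simp only [d, LinearMap.sub_apply, LinearMap.comp_apply, hθa, map_zero, sub_zero]
    exact hh a
  let ιe : ↥A ≃ₗ[R] ↥N' := LinearEquiv.ofInjective ι hι
  let d' : ((↥K) →₀ R) →ₗ[R] ↥A := ιe.symm.toLinearMap.comp (d.codRestrict N' hdmem)
  have hd'A : ∀ a : ↥A, d' (A.subtype a) = a := by
    intro a
    have h1 : (d.codRestrict N' hdmem) (A.subtype a) = ιe a := by
      apply Subtype.ext
      rw [LinearMap.codRestrict_apply, hdA a]
      rfl
    simp only [d', LinearMap.comp_apply, LinearEquiv.coe_coe, h1, LinearEquiv.symm_apply_apply]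
  have hkerp : LinearMap.ker θ ≤
      LinearMap.ker (LinearMap.id - A.subtype.comp d' : ((↥K) →₀ R) →ₗ[R] ((↥K) →₀ R)) := by
    intro a ha
    have h1 : d' a = ⟨a, ha⟩ := hd'A ⟨a, ha⟩
    rw [LinearMap.mem_ker, LinearMap.sub_apply, LinearMap.id_apply, LinearMap.comp_apply, h1]
    exact sub_self a
  let i : ↥K →ₗ[R] ((↥K) →₀ R) := factorThru θ hθ (LinearMap.id - A.subtype.comp d') hkerp
  have hsec : ∀ k : ↥K, θ (i k) = k := by
    intro k
    obtain ⟨y, rfl⟩ := hθ k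
    rw [factorThru_apply]
    have h1 : θ (A.subtype (d' y)) = 0 := (d' y).2
    rw [LinearMap.sub_apply, LinearMap.id_apply, LinearMap.comp_apply, map_sub, h1, sub_zero]
  exact Module.Projective.of_split i θ (LinearMap.ext hsec)

/-- Over a ring all of whose ideals are projective, every module has projective
dimension at most `1`. -/
theorem projDimLE1_of_hereditary
    (hered : ∀ I : Ideal R, Module.Projective R I)
    (M : Type u) [AddCommGroup M] [Module R M] : ProjDimLE1 R M := by
  classical
  exact ⟨ModuleCat.of R (M →₀ R), Finsupp.linearCombination R (id : M → M),
    inferInstanceAs (Module.Projective R (M →₀ R)),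
    Finsupp.linearCombination_surjective R Function.surjective_id,
    submodule_projective_of_hereditary hered (M →₀ R) _⟩

/-- If `𝒫₁(R)` is covering over a commutative Von Neumann regular ring, then every
ideal is projective. -/
theorem hereditary_of_covering
    (hvnr : ∀ a : R, ∃ x : R, a * x * a = a)
    (hcov : IsCoveringClass R (P1Class R)) (I : Ideal R) : Module.Projective R I := by
  classical
  obtain ⟨P, φ, hP1, hpre, hmin⟩ := hcov (ModuleCat.of R (R ⧸ I))
  -- a copy of φ with codomain `R ⧸ I` carrying the standard instances
  let φc : (P : Type u) →ₗ[R] R ⧸ I :=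
    { toFun := φ
      map_add' := fun x y => φ.map_add x y
      map_smul' := fun c x => φ.map_smul c x }
  have hmin' : ∀ e : (P : Type u) →ₗ[R] (P : Type u), φc.comp e = φc → Function.Bijective e := by
    intro e he
    refine hmin e ?_
    ext x
    exact DFunLike.congr_fun he x
  -- Step A : I • P = 0, using the cover property for mult. by idempotents of I
  have hsmulP : ∀ a ∈ I, ∀ x : (P : Type u), a • x = 0 := by
    intro a ha
    obtain ⟨y, hy⟩ := hvnr a
    have hee : (a * y) * (a * y) = a * y := by
      calc (a * y) * (a * y) = (a * y * a) * y := by ring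
        _ = a * y := by rw [hy]
    have heI : a * y ∈ I := I.mul_mem_right y ha
    have hφτ : φc.comp ((1 - a * y) • (LinearMap.id : (P : Type u) →ₗ[R] (P : Type u))) = φc := by
      ext x
      rw [LinearMap.comp_apply, LinearMap.smul_apply, LinearMap.id_apply, map_smul, sub_smul,
        one_smul]
      have h0 : (a * y) • φc x = 0 := by
        obtain ⟨r, hr⟩ := I.mkQ_surjective (φc x)
        rw [← hr, ← map_smul, smul_eq_mul, Submodule.mkQ_apply, Submodule.Quotient.mk_eq_zero]
        exact I.mul_mem_right r heI
      rw [h0, sub_zero]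
    have hbij := hmin' _ hφτ
    have hey : ∀ x : (P : Type u), (a * y) • x = 0 := by
      intro x
      apply hbij.injective
      rw [map_zero, LinearMap.smul_apply, LinearMap.id_apply, smul_smul, sub_mul, one_mul, hee,
        sub_self, zero_smul]
    intro x
    calc a • x = ((a * y) * a) • x := by rw [hy]
      _ = (a * y) • (a • x) := by rw [mul_smul]
      _ = 0 := hey _
  -- Step B : find p with φ p = mkQ 1
  have hRmem : ModuleCat.of R R ∈ P1Class R := by
    refine ⟨ModuleCat.of R R, LinearMap.id (M := R),
      inferInstanceAs (Module.Projective R R), Function.surjective_id, ?_⟩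
    rw [LinearMap.ker_id]
    infer_instance
  obtain ⟨h0, hh0⟩ := hpre (ModuleCat.of R R) hRmem I.mkQ
  have hφp : φc (h0 (1 : R)) = I.mkQ 1 := DFunLike.congr_fun hh0 (1 : R)
  -- Step C : a splitting s of φ
  have hkerp : I ≤ LinearMap.ker (LinearMap.toSpanSingleton R (P : Type u) (h0 (1 : R))) := by
    intro a ha
    rw [LinearMap.mem_ker, LinearMap.toSpanSingleton_apply]
    exact hsmulP a ha _
  let s : (R ⧸ I) →ₗ[R] (P : Type u) :=
    Submodule.liftQ I (LinearMap.toSpanSingleton R (P : Type u) (h0 (1 : R))) hkerp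
  have hφs : ∀ z, φc (s z) = z := by
    intro z
    obtain ⟨r, rfl⟩ := I.mkQ_surjective z
    have h1 : s (I.mkQ r) = r • (h0 (1 : R)) := by
      rw [Submodule.mkQ_apply, Submodule.liftQ_apply, LinearMap.toSpanSingleton_apply]
    rw [h1, map_smul, hφp, ← map_smul, smul_eq_mul, mul_one]
  -- Step D : φ is bijective, so R⧸I ∈ 𝒫₁
  have hφcomp : φc.comp (s.comp φc) = φc := by
    ext x
    simp only [LinearMap.comp_apply]
    exact hφs (φc x)
  have hbij := hmin' _ hφcomp
  have hinj : Function.Injective φc := by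
    intro x y hxy
    apply hbij.injective
    show s (φc x) = s (φc y)
    rw [hxy]
  have hφsurj : Function.Surjective φc := fun z => ⟨s z, hφs z⟩
  -- Step E : R⧸I has a two-step projective resolution
  obtain ⟨Q, g, hQproj, hgsurj, hkerg⟩ := hP1
  let G : (Q : Type u) →ₗ[R] R ⧸ I := φc.comp g
  have hGsurj : Function.Surjective G := by
    intro z
    obtain ⟨w, hw⟩ := hφsurj z
    obtain ⟨q, hq⟩ := hgsurj w
    exact ⟨q, by rw [show G q = φc (g q) from rfl, hq, hw]⟩
  have hkerG : LinearMap.ker G = LinearMap.ker g := by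
    ext q
    simp only [LinearMap.mem_ker, show G q = φc (g q) from rfl]
    exact ⟨fun hq => hinj (by rw [hq, map_zero]), fun hq => by rw [hq, map_zero]⟩
  haveI hkerGproj : Module.Projective R (LinearMap.ker G) := by
    rw [hkerG]; exact hkerg
  haveI := hQproj
  -- Step F : Schanuel-style argument, I is a retract of (ker G) × R
  obtain ⟨gt, hgt⟩ := Module.projective_lifting_property I.mkQ G I.mkQ_surjective
  obtain ⟨t, ht⟩ := Module.projective_lifting_property G I.mkQ hGsurj
  let D : (R × (Q : Type u)) →ₗ[R] R ⧸ I :=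
    I.mkQ.comp (LinearMap.fst R R (Q : Type u)) - G.comp (LinearMap.snd R R (Q : Type u))
  let X : Submodule R (R × (Q : Type u)) := LinearMap.ker D
  have hmemX : ∀ (r : R) (q : (Q : Type u)), ((r, q) ∈ X ↔ I.mkQ r = G q) := by
    intro r q
    simp only [X, D, LinearMap.mem_ker, LinearMap.sub_apply, LinearMap.comp_apply,
      LinearMap.fst_apply, LinearMap.snd_apply, sub_eq_zero]
  have humem : ∀ a : ↥I, (((a : R), (0 : (Q : Type u))) ∈ X) := by
    intro a
    rw [hmemX, map_zero, Submodule.mkQ_apply, Submodule.Quotient.mk_eq_zero]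
    exact a.2
  let uu : ↥I →ₗ[R] ↥X :=
    LinearMap.codRestrict X ((LinearMap.inl R R (Q : Type u)).comp I.subtype) humem
  let wmap : ↥X →ₗ[R] R := (LinearMap.fst R R (Q : Type u)).comp X.subtype -
    gt.comp ((LinearMap.snd R R (Q : Type u)).comp X.subtype)
  have hXmk : ∀ x : ↥X, I.mkQ (x : R × (Q : Type u)).1 = G (x : R × (Q : Type u)).2 := by
    intro x
    exact (hmemX (x : R × (Q : Type u)).1 (x : R × (Q : Type u)).2).mp (by exact x.2)
  have hwmem : ∀ x : ↥X, wmap x ∈ I := by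
    intro x
    have h3 : I.mkQ (wmap x) = 0 := by
      simp only [wmap, LinearMap.sub_apply, LinearMap.comp_apply, map_sub, LinearMap.fst_apply,
        LinearMap.snd_apply, Submodule.coe_subtype]
      rw [hXmk x, show I.mkQ (gt ((x : R × (Q : Type u)).2)) = G ((x : R × (Q : Type u)).2) from
        DFunLike.congr_fun hgt _, sub_self]
    rwa [Submodule.mkQ_apply, Submodule.Quotient.mk_eq_zero] at h3
  let vv : ↥X →ₗ[R] ↥I := LinearMap.codRestrict (I : Submodule R R) wmap hwmem
  have hvu : ∀ a : ↥I, vv (uu a) = a := by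
    intro a
    apply Subtype.ext
    simp only [vv, uu, wmap, LinearMap.codRestrict_apply, LinearMap.sub_apply,
      LinearMap.comp_apply, LinearMap.fst_apply, LinearMap.snd_apply, Submodule.coe_subtype,
      LinearMap.inl_apply, map_zero, sub_zero]
    change (a : R) - gt 0 = a
    rw [map_zero, sub_zero]
  have hmem1 : ∀ x : ↥X, ((x : R × (Q : Type u)).2 - t ((x : R × (Q : Type u)).1)
      ∈ LinearMap.ker G) := by
    intro x
    rw [LinearMap.mem_ker, map_sub,
      show G (t ((x : R × (Q : Type u)).1)) = I.mkQ ((x : R × (Q : Type u)).1) from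
        DFunLike.congr_fun ht _, ← hXmk x, sub_self]
  let α : ↥X →ₗ[R] (↥(LinearMap.ker G) × R) :=
    LinearMap.prod
      (LinearMap.codRestrict (LinearMap.ker G)
        (((LinearMap.snd R R (Q : Type u)).comp X.subtype) -
          t.comp ((LinearMap.fst R R (Q : Type u)).comp X.subtype)) hmem1)
      ((LinearMap.fst R R (Q : Type u)).comp X.subtype)
  have hmem2 : ∀ z : (↥(LinearMap.ker G) × R), ((z.2, (z.1 : (Q : Type u)) + t z.2) ∈ X) := by
    intro z
    rw [hmemX, map_add, show G (t z.2) = I.mkQ z.2 from DFunLike.congr_fun ht _,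
      show G ((z.1 : (Q : Type u))) = 0 from LinearMap.mem_ker.mp z.1.2, zero_add]
  let β : (↥(LinearMap.ker G) × R) →ₗ[R] ↥X :=
    LinearMap.codRestrict X
      (LinearMap.prod (LinearMap.snd R (↥(LinearMap.ker G)) R)
        ((LinearMap.ker G).subtype.comp (LinearMap.fst R (↥(LinearMap.ker G)) R) +
          t.comp (LinearMap.snd R (↥(LinearMap.ker G)) R))) hmem2
  have hβα : ∀ x : ↥X, β (α x) = x := by
    intro x
    apply Subtype.ext
    apply Prod.ext
    · simp only [β, α, LinearMap.codRestrict_apply, LinearMap.prod_apply, Function.prod,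
        LinearMap.comp_apply, LinearMap.fst_apply, LinearMap.snd_apply, Submodule.coe_subtype]
      rfl
    · show (x : R × (Q : Type u)).2 - t (x : R × (Q : Type u)).1 + t (x : R × (Q : Type u)).1 =
        (x : R × (Q : Type u)).2
      abel
  haveI : Module.Projective R (↥(LinearMap.ker G) × R) := inferInstance
  refine Module.Projective.of_split (α.comp uu) (vv.comp β) ?_
  apply LinearMap.ext
  intro a
  simp only [LinearMap.comp_apply, LinearMap.id_apply]
  rw [hβα (uu a), hvu a]

end Auxiliary

/-- **Proposition 6.3.** Let `R` be a commutative Von Neumann regular ring. Then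
`𝒫₁(R)` is covering if and only if `R` is hereditary (every ideal is projective). -/
theorem vnr_P1_covering_iff_hereditary (R : Type u) [CommRing R]
    (hvnr : ∀ a : R, ∃ x : R, a * x * a = a) :
    IsCoveringClass R (P1Class R) ↔ (∀ I : Ideal R, Module.Projective R I) := by
  constructor
  · intro hcov I
    exact hereditary_of_covering hvnr hcov I
  · intro hered M
    refine ⟨M, LinearMap.id, ?_, ?_, ?_⟩
    · exact projDimLE1_of_hereditary hered (M : Type u)
    · intro P' _ ψ
      exact ⟨ψ, LinearMap.id_comp ψ⟩
    · intro e he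
      have h1 : e = LinearMap.id := by rwa [LinearMap.id_comp] at he
      rw [h1]
      exact Function.bijective_id
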